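/- The 3×3 circulant matrix with rows (a,b,c), (c,a,b), (b,c,a), with a,b,c ≥ 0, has psd rank at most 2 if and only if a² + b² + c² − 2(ab + ac + bc) ≤ 0. -/

import Mathlib

open Matrix

lemma psd2 (p q r : ℝ) (hp : 0 ≤ p) (hr : 0 ≤ r) (hq : q^2 ≤ p*r) :
    (!![p, q; q, r] : Matrix (Fin 2) (Fin 2) ℝ).PosSemidef := by
  rw [Matrix.posSemidef_iff_dotProduct_mulVec]
  constructor
  · ext i j
    fin_cases i <;> fin_cases j <;> simp [Matrix.conjTranspose_apply]
  · intro x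
    simp [dotProduct, Matrix.mulVec, Fin.sum_univ_two]
    rcases eq_or_lt_of_le hp with h0 | h0
    · have hq0 : q = 0 := by nlinarith [sq_nonneg q]
      rw [← h0, hq0]
      ring_nf
      positivity
    · nlinarith [sq_nonneg (p * x 0 + q * x 1), mul_nonneg (show (0:ℝ) ≤ p*r - q^2 by linarith) (sq_nonneg (x 1))]

lemma psd_facts (M : Matrix (Fin 2) (Fin 2) ℝ) (h : M.PosSemidef) :
    0 ≤ M 0 0 ∧ 0 ≤ M 1 1 ∧ M 1 0 = M 0 1 ∧ (M 0 1)^2 ≤ M 0 0 * M 1 1 := by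
  obtain ⟨hherm, hq⟩ := Matrix.posSemidef_iff_dotProduct_mulVec.mp h
  have hsym : M 1 0 = M 0 1 := by
    have := congrFun (congrFun hherm.symm 0) 1
    simpa [Matrix.conjTranspose_apply] using this.symm
  have key : ∀ u v : ℝ, 0 ≤ M 0 0 * u * u + 2 * M 0 1 * u * v + M 1 1 * v * v := by
    intro u v
    have h2 := hq ![u, v]
    simp [dotProduct, Matrix.mulVec, Fin.sum_univ_two, hsym] at h2
    linarith
  have h00 : 0 ≤ M 0 0 := by have := key 1 0; linarith
  have h11 : 0 ≤ M 1 1 := by have := key 0 1; linarith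
  have hdisc : discrim (M 0 0) (2 * M 0 1) (M 1 1) ≤ 0 := by
    apply discrim_le_zero
    intro x
    have := key x 1
    linarith
  rw [discrim] at hdisc
  refine ⟨h00, h11, hsym, by nlinarith⟩

lemma trace_mul_fin_two (X Y : Matrix (Fin 2) (Fin 2) ℝ) :
    (X * Y).trace = X 0 0 * Y 0 0 + X 0 1 * Y 1 0 + X 1 0 * Y 0 1 + X 1 1 * Y 1 1 := by
  simp [Matrix.trace_fin_two, Matrix.mul_apply, Fin.sum_univ_two]
  ring

set_option maxRecDepth 100000
set_option maxHeartbeats 3200000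

lemma revCS (A B C D E F : ℝ) (hA : 0 ≤ A) (hC : 0 ≤ C) (hB : B^2 ≤ A*C)
    (hD : 0 ≤ D) (hF : 0 ≤ F) (hE : E^2 ≤ D*F) :
    0 ≤ A*D + 2*B*E + C*F ∧ 4*(A*C - B^2)*(D*F - E^2) ≤ (A*D + 2*B*E + C*F)^2 := by
  obtain ⟨x, hx0, hx2⟩ : ∃ x : ℝ, 0 ≤ x ∧ x^2 = A*C :=
    ⟨Real.sqrt (A*C), Real.sqrt_nonneg _, Real.sq_sqrt (mul_nonneg hA hC)⟩
  obtain ⟨y, hy0, hy2⟩ : ∃ y : ℝ, 0 ≤ y ∧ y^2 = D*F :=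
    ⟨Real.sqrt (D*F), Real.sqrt_nonneg _, Real.sq_sqrt (mul_nonneg hD hF)⟩
  obtain ⟨u, hu0, hu2⟩ : ∃ u : ℝ, 0 ≤ u ∧ u^2 = A*C - B^2 :=
    ⟨Real.sqrt (A*C - B^2), Real.sqrt_nonneg _, Real.sq_sqrt (by nlinarith [sq_nonneg B])⟩
  obtain ⟨v, hv0, hv2⟩ : ∃ v : ℝ, 0 ≤ v ∧ v^2 = D*F - E^2 :=
    ⟨Real.sqrt (D*F - E^2), Real.sqrt_nonneg _, Real.sq_sqrt (by nlinarith [sq_nonneg E])⟩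
  have hxyBE : 0 ≤ x*y + B*E := by
    nlinarith [sq_nonneg (x*y + B*E), sq_nonneg (x*y - B*E), mul_nonneg hx0 hy0, sq_nonneg B, sq_nonneg E]
  have huv : u*v ≤ x*y + B*E := by
    nlinarith [sq_nonneg (x*E + B*y), mul_nonneg hu0 hv0]
  have hADCF : 2*(x*y) ≤ A*D + C*F := by
    have h1 : 4*(A*C)*(D*F) ≤ (A*D + C*F)^2 := by nlinarith [sq_nonneg (A*D - C*F)]
    have h2 : 0 ≤ A*D + C*F := by positivity
    nlinarith [mul_nonneg hx0 hy0]
  have hR : 2*(u*v) ≤ A*D + 2*B*E + C*F := by nlinarith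
  constructor
  · nlinarith [mul_nonneg hu0 hv0]
  · nlinarith [mul_nonneg hu0 hv0]

lemma amgm3 (x y z : ℝ) (hx : 0 ≤ x) (hy : 0 ≤ y) (hz : 0 ≤ z) :
    27*(x*y*z) ≤ (x+y+z)^3 := by
  nlinarith [sq_nonneg (x-y), sq_nonneg (y-z), sq_nonneg (x-z), mul_nonneg hx hy, mul_nonneg hy hz, mul_nonneg hx hz, mul_nonneg (mul_nonneg hx hy) hz, sq_nonneg (x+y-2*z), sq_nonneg (y+z-2*x), sq_nonneg (x+z-2*y)]


set_option maxRecDepth 100000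
set_option maxHeartbeats 1600000
lemma cube_step (D0 D1 D2 g01 g02 g12 dS PX : ℝ)
    (hD0 : 0 ≤ D0) (hD1 : 0 ≤ D1) (hD2 : 0 ≤ D2)
    (hg01 : 0 ≤ g01) (hg02 : 0 ≤ g02) (hg12 : 0 ≤ g12)
    (hrx : 4*(D0*D1) ≤ g01^2)
    (hdsid : dS = D0 + D1 + D2 + g01 + g02 + g12)
    (hgx : 8*(D0*(D1*D2)) + 2*(g01*(g02*g12)) - (2*(D0*g12^2) + 2*(D1*g02^2) + 2*(D2*g01^2)) = 2*PX^2) :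
    27*PX^2 ≤ dS^3 := by
  have h1 : 2*PX^2 ≤ 2*(g01*(g02*g12)) := by
    nlinarith only [mul_nonneg hD2 (sub_nonneg.mpr hrx), mul_nonneg hD0 (sq_nonneg g12), mul_nonneg hD1 (sq_nonneg g02), hgx]
  have h2 := amgm3 g01 g02 g12 hg01 hg02 hg12
  have h3 : (g01+g02+g12)^3 ≤ dS^3 :=
    pow_le_pow_left₀ (by linarith only [hg01, hg02, hg12]) (by linarith only [hdsid, hD0, hD1, hD2]) 3
  nlinarith only [h1, h2, h3]

lemma combine_step (px py ds es T : ℝ)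
    (hdsnn : 0 ≤ ds) (hesnn : 0 ≤ es)
    (hX : 27*px^2 ≤ ds^3) (hY : 27*py^2 ≤ es^3)
    (hrev : 4*ds*es ≤ (3*T)^2) :
    16*(2*(px*py))^2 ≤ (T^2)^3 := by
  have h729 : (27*px^2)*(27*py^2) ≤ ds^3*es^3 :=
    mul_le_mul hX hY (by positivity) (pow_nonneg hdsnn 3)
  have hc3 : (4*ds*es)^3 ≤ ((3*T)^2)^3 :=
    pow_le_pow_left₀ (by positivity) hrev 3
  nlinarith only [h729, hc3, sq_nonneg (px*py)]

lemma final_step (a b c : ℝ) (ha : 0 ≤ a) (hb : 0 ≤ b) (hc : 0 ≤ c)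
    (hmain : 16*(a^3+b^3+c^3 - 3*(a*b*c))^2 ≤ ((a+b+c)^2)^3) :
    a ^ 2 + b ^ 2 + c ^ 2 - 2 * (a * b + a * c + b * c) ≤ 0 := by
  have hR0 : 0 ≤ a^2+b^2+c^2 - a*b - a*c - b*c := by
    nlinarith only [sq_nonneg (a-b), sq_nonneg (b-c), sq_nonneg (a-c)]
  rcases eq_or_lt_of_le (by linarith only [ha, hb, hc] : (0:ℝ) ≤ a+b+c) with hz | hpos
  · have hA : a = 0 := by linarith only [ha, hb, hc, hz]
    have hB : b = 0 := by linarith only [ha, hb, hc, hz]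
    have hC : c = 0 := by linarith only [ha, hb, hc, hz]
    rw [hA, hB, hC]; norm_num
  · have hfac : 16*((a+b+c)*(a^2+b^2+c^2 - a*b - a*c - b*c))^2 ≤ ((a+b+c)^2)^3 := by
      nlinarith only [hmain]
    have h2 : 16*(a^2+b^2+c^2 - a*b - a*c - b*c)^2 ≤ (a+b+c)^4 := by
      nlinarith only [hfac, mul_pos hpos hpos, sq_nonneg (a^2+b^2+c^2 - a*b - a*c - b*c), hpos]
    have h3 : 4*(a^2+b^2+c^2 - a*b - a*c - b*c) ≤ (a+b+c)^2 := by
      nlinarith only [h2, hR0, sq_nonneg ((a+b+c)^2 - 4*(a^2+b^2+c^2 - a*b - a*c - b*c)), hpos]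
    linarith only [h3]

lemma tail (a b c vD0 vD1 vD2 vF0 vF1 vF2 vg01 vg02 vg12 vk01 vk02 vk12 vPX vPY vdS veS : ℝ)
    (ha : 0 ≤ a) (hb : 0 ≤ b) (hc : 0 ≤ c)
    (hD0 : 0 ≤ vD0) (hD1 : 0 ≤ vD1) (hD2 : 0 ≤ vD2)
    (hF0 : 0 ≤ vF0) (hF1 : 0 ≤ vF1) (hF2 : 0 ≤ vF2)
    (hg01 : 0 ≤ vg01) (hg02 : 0 ≤ vg02) (hg12 : 0 ≤ vg12)
    (hk01 : 0 ≤ vk01) (hk02 : 0 ≤ vk02) (hk12 : 0 ≤ vk12)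
    (hrx : 4*(vD0*vD1) ≤ vg01^2) (hry : 4*(vF0*vF1) ≤ vk01^2)
    (hdsid : vdS = vD0 + vD1 + vD2 + vg01 + vg02 + vg12)
    (hesid : veS = vF0 + vF1 + vF2 + vk01 + vk02 + vk12)
    (hgx : 8*(vD0*(vD1*vD2)) + 2*(vg01*(vg02*vg12)) - (2*(vD0*vg12^2) + 2*(vD1*vg02^2) + 2*(vD2*vg01^2)) = 2*vPX^2)
    (hgy : 8*(vF0*(vF1*vF2)) + 2*(vk01*(vk02*vk12)) - (2*(vF0*vk12^2) + 2*(vF1*vk02^2) + 2*(vF2*vk01^2)) = 2*vPY^2)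
    (hdsnn : 0 ≤ vdS) (hesnn : 0 ≤ veS)
    (hdet : 2*(vPX*vPY) = a^3+b^3+c^3 - 3*(a*b*c))
    (hrev : 4*vdS*veS ≤ (3*(a+b+c))^2) :
    a ^ 2 + b ^ 2 + c ^ 2 - 2 * (a * b + a * c + b * c) ≤ 0 := by
  have hX := cube_step vD0 vD1 vD2 vg01 vg02 vg12 vdS vPX hD0 hD1 hD2 hg01 hg02 hg12 hrx hdsid hgx
  have hY := cube_step vF0 vF1 vF2 vk01 vk02 vk12 veS vPY hF0 hF1 hF2 hk01 hk02 hk12 hry hesid hgy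
  have hcomb := combine_step vPX vPY vdS veS (a+b+c) hdsnn hesnn hX hY hrev
  rw [hdet] at hcomb
  exact final_step a b c ha hb hc (by linarith only [hcomb])

set_option maxHeartbeats 3200000 in
theorem necessity_scalar (a b c a0 b0 c0 a1 b1 c1 a2 b2 c2 d0 e0 f0 d1 e1 f1 d2 e2 f2 : ℝ)
    (ha : 0 ≤ a) (hb : 0 ≤ b) (hc : 0 ≤ c)
    (hA0a : 0 ≤ a0) (hA0c : 0 ≤ c0) (hA0d : b0^2 ≤ a0*c0)
    (hA1a : 0 ≤ a1) (hA1c : 0 ≤ c1) (hA1d : b1^2 ≤ a1*c1)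
    (hA2a : 0 ≤ a2) (hA2c : 0 ≤ c2) (hA2d : b2^2 ≤ a2*c2)
    (hB0a : 0 ≤ d0) (hB0c : 0 ≤ f0) (hB0d : e0^2 ≤ d0*f0)
    (hB1a : 0 ≤ d1) (hB1c : 0 ≤ f1) (hB1d : e1^2 ≤ d1*f1)
    (hB2a : 0 ≤ d2) (hB2c : 0 ≤ f2) (hB2d : e2^2 ≤ d2*f2)
    (E00 : a0*d0 + 2*(b0*e0) + c0*f0 = a)
    (E01 : a0*d1 + 2*(b0*e1) + c0*f1 = b)
    (E02 : a0*d2 + 2*(b0*e2) + c0*f2 = c)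
    (E10 : a1*d0 + 2*(b1*e0) + c1*f0 = c)
    (E11 : a1*d1 + 2*(b1*e1) + c1*f1 = a)
    (E12 : a1*d2 + 2*(b1*e2) + c1*f2 = b)
    (E20 : a2*d0 + 2*(b2*e0) + c2*f0 = b)
    (E21 : a2*d1 + 2*(b2*e1) + c2*f1 = c)
    (E22 : a2*d2 + 2*(b2*e2) + c2*f2 = a) :
    a ^ 2 + b ^ 2 + c ^ 2 - 2 * (a * b + a * c + b * c) ≤ 0 := by
  have hdet : 2*((a0*(b1*c2 - b2*c1) - a1*(b0*c2 - b2*c0) + a2*(b0*c1 - b1*c0))*(d0*(e1*f2 - e2*f1) - d1*(e0*f2 - e2*f0) + d2*(e0*f1 - e1*f0))) = a^3+b^3+c^3 - 3*(a*b*c) := by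
    linear_combination ((a1*d1 + 2*(b1*e1) + c1*f1)*(a2*d2 + 2*(b2*e2) + c2*f2) - (a1*d2 + 2*(b1*e2) + c1*f2)*(a2*d1 + 2*(b2*e1) + c2*f1))*E00 + (-((a1*d0 + 2*(b1*e0) + c1*f0)*(a2*d2 + 2*(b2*e2) + c2*f2) - (a1*d2 + 2*(b1*e2) + c1*f2)*(a2*d0 + 2*(b2*e0) + c2*f0)))*E01 + ((a1*d0 + 2*(b1*e0) + c1*f0)*(a2*d1 + 2*(b2*e1) + c2*f1) - (a1*d1 + 2*(b1*e1) + c1*f1)*(a2*d0 + 2*(b2*e0) + c2*f0))*E02 + (-(b*(a2*d2 + 2*(b2*e2) + c2*f2) - c*(a2*d1 + 2*(b2*e1) + c2*f1)))*E10 + (a*(a2*d2 + 2*(b2*e2) + c2*f2) - c*(a2*d0 + 2*(b2*e0) + c2*f0))*E11 + (-(a*(a2*d1 + 2*(b2*e1) + c2*f1) - b*(a2*d0 + 2*(b2*e0) + c2*f0)))*E12 + (b*b - c*a)*E20 + (c*c - a*b)*E21 + (a*a - b*c)*E22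
  obtain ⟨hg01, hr01⟩ := revCS a0 b0 c0 c1 (-b1) a1 hA0a hA0c hA0d hA1c hA1a (by nlinarith only [hA1d])
  obtain ⟨hk01, hs01⟩ := revCS d0 e0 f0 f1 (-e1) d1 hB0a hB0c hB0d hB1c hB1a (by nlinarith only [hB1d])
  obtain ⟨hg02, hr02⟩ := revCS a0 b0 c0 c2 (-b2) a2 hA0a hA0c hA0d hA2c hA2a (by nlinarith only [hA2d])
  obtain ⟨hk02, hs02⟩ := revCS d0 e0 f0 f2 (-e2) d2 hB0a hB0c hB0d hB2c hB2a (by nlinarith only [hB2d])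
  obtain ⟨hg12, hr12⟩ := revCS a1 b1 c1 c2 (-b2) a2 hA1a hA1c hA1d hA2c hA2a (by nlinarith only [hA2d])
  obtain ⟨hk12, hs12⟩ := revCS d1 e1 f1 f2 (-e2) d2 hB1a hB1c hB1d hB2c hB2a (by nlinarith only [hB2d])
  have hD0 : 0 ≤ a0*c0 - b0^2 := by linarith only [hA0d]
  have hF0 : 0 ≤ d0*f0 - e0^2 := by linarith only [hB0d]
  have hD1 : 0 ≤ a1*c1 - b1^2 := by linarith only [hA1d]
  have hF1 : 0 ≤ d1*f1 - e1^2 := by linarith only [hB1d]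
  have hD2 : 0 ≤ a2*c2 - b2^2 := by linarith only [hA2d]
  have hF2 : 0 ≤ d2*f2 - e2^2 := by linarith only [hB2d]
  have hgp01 : 0 ≤ a0*c1 + c0*a1 - 2*(b0*b1) := by linarith only [hg01]
  have hkp01 : 0 ≤ d0*f1 + f0*d1 - 2*(e0*e1) := by linarith only [hk01]
  have hgp02 : 0 ≤ a0*c2 + c0*a2 - 2*(b0*b2) := by linarith only [hg02]
  have hkp02 : 0 ≤ d0*f2 + f0*d2 - 2*(e0*e2) := by linarith only [hk02]
  have hgp12 : 0 ≤ a1*c2 + c1*a2 - 2*(b1*b2) := by linarith only [hg12]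
  have hkp12 : 0 ≤ d1*f2 + f1*d2 - 2*(e1*e2) := by linarith only [hk12]
  have hrx : 4*((a0*c0 - b0^2)*(a1*c1 - b1^2)) ≤ (a0*c1 + c0*a1 - 2*(b0*b1))^2 := by linarith only [hr01]
  have hry : 4*((d0*f0 - e0^2)*(d1*f1 - e1^2)) ≤ (d0*f1 + f0*d1 - 2*(e0*e1))^2 := by linarith only [hs01]
  have hdsid : (a0+a1+a2)*(c0+c1+c2) - (b0+b1+b2)^2 = (a0*c0 - b0^2) + (a1*c1 - b1^2) + (a2*c2 - b2^2) + (a0*c1 + c0*a1 - 2*(b0*b1)) + (a0*c2 + c0*a2 - 2*(b0*b2)) + (a1*c2 + c1*a2 - 2*(b1*b2)) := by ring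
  have hesid : (d0+d1+d2)*(f0+f1+f2) - (e0+e1+e2)^2 = (d0*f0 - e0^2) + (d1*f1 - e1^2) + (d2*f2 - e2^2) + (d0*f1 + f0*d1 - 2*(e0*e1)) + (d0*f2 + f0*d2 - 2*(e0*e2)) + (d1*f2 + f1*d2 - 2*(e1*e2)) := by ring
  have hgx : 8*((a0*c0 - b0^2)*((a1*c1 - b1^2)*(a2*c2 - b2^2))) + 2*((a0*c1 + c0*a1 - 2*(b0*b1))*((a0*c2 + c0*a2 - 2*(b0*b2))*(a1*c2 + c1*a2 - 2*(b1*b2)))) - (2*((a0*c0 - b0^2)*(a1*c2 + c1*a2 - 2*(b1*b2))^2) + 2*((a1*c1 - b1^2)*(a0*c2 + c0*a2 - 2*(b0*b2))^2) + 2*((a2*c2 - b2^2)*(a0*c1 + c0*a1 - 2*(b0*b1))^2)) = 2*(a0*(b1*c2 - b2*c1) - a1*(b0*c2 - b2*c0) + a2*(b0*c1 - b1*c0))^2 := by ring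
  have hgy : 8*((d0*f0 - e0^2)*((d1*f1 - e1^2)*(d2*f2 - e2^2))) + 2*((d0*f1 + f0*d1 - 2*(e0*e1))*((d0*f2 + f0*d2 - 2*(e0*e2))*(d1*f2 + f1*d2 - 2*(e1*e2)))) - (2*((d0*f0 - e0^2)*(d1*f2 + f1*d2 - 2*(e1*e2))^2) + 2*((d1*f1 - e1^2)*(d0*f2 + f0*d2 - 2*(e0*e2))^2) + 2*((d2*f2 - e2^2)*(d0*f1 + f0*d1 - 2*(e0*e1))^2)) = 2*(d0*(e1*f2 - e2*f1) - d1*(e0*f2 - e2*f0) + d2*(e0*f1 - e1*f0))^2 := by ring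
  have hdsnn : 0 ≤ (a0+a1+a2)*(c0+c1+c2) - (b0+b1+b2)^2 := by linarith only [hdsid, hD0, hD1, hD2, hgp01, hgp02, hgp12]
  have hesnn : 0 ≤ (d0+d1+d2)*(f0+f1+f2) - (e0+e1+e2)^2 := by linarith only [hesid, hF0, hF1, hF2, hkp01, hkp02, hkp12]
  have hsum : (a0+a1+a2) * (d0+d1+d2) + 2 * (b0+b1+b2) * (e0+e1+e2) + (c0+c1+c2) * (f0+f1+f2) = 3*(a+b+c) := by linarith only [E00, E01, E02, E10, E11, E12, E20, E21, E22]
  obtain ⟨-, hrev⟩ := revCS (a0+a1+a2) (b0+b1+b2) (c0+c1+c2) (d0+d1+d2) (e0+e1+e2) (f0+f1+f2) (by linarith only [hA0a, hA1a, hA2a, hA0c, hA1c, hA2c, hB0a, hB1a, hB2a, hB0c, hB1c, hB2c]) (by linarith only [hA0a, hA1a, hA2a, hA0c, hA1c, hA2c, hB0a, hB1a, hB2a, hB0c, hB1c, hB2c]) (by linarith only [hdsnn]) (by linarith only [hA0a, hA1a, hA2a, hA0c, hA1c, hA2c, hB0a, hB1a, hB2a, hB0c, hB1c, hB2c]) (by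 linarith only [hA0a, hA1a, hA2a, hA0c, hA1c, hA2c, hB0a, hB1a, hB2a, hB0c, hB1c, hB2c]) (by linarith only [hesnn])
  rw [hsum] at hrev
  obtain ⟨vD0, hvD0⟩ : ∃ x : ℝ, a0*c0 - b0^2 = x := ⟨_, rfl⟩
  rw [hvD0] at hD0 hrx hdsid hgx
  obtain ⟨vD1, hvD1⟩ : ∃ x : ℝ, a1*c1 - b1^2 = x := ⟨_, rfl⟩
  rw [hvD1] at hD1 hrx hdsid hgx
  obtain ⟨vD2, hvD2⟩ : ∃ x : ℝ, a2*c2 - b2^2 = x := ⟨_, rfl⟩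
  rw [hvD2] at hD2 hdsid hgx
  obtain ⟨vF0, hvF0⟩ : ∃ x : ℝ, d0*f0 - e0^2 = x := ⟨_, rfl⟩
  rw [hvF0] at hF0 hry hesid hgy
  obtain ⟨vF1, hvF1⟩ : ∃ x : ℝ, d1*f1 - e1^2 = x := ⟨_, rfl⟩
  rw [hvF1] at hF1 hry hesid hgy
  obtain ⟨vF2, hvF2⟩ : ∃ x : ℝ, d2*f2 - e2^2 = x := ⟨_, rfl⟩
  rw [hvF2] at hF2 hesid hgy
  obtain ⟨vg01, hvg01⟩ : ∃ x : ℝ, a0*c1 + c0*a1 - 2*(b0*b1) = x := ⟨_, rfl⟩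
  rw [hvg01] at hgp01 hrx hdsid hgx
  obtain ⟨vg02, hvg02⟩ : ∃ x : ℝ, a0*c2 + c0*a2 - 2*(b0*b2) = x := ⟨_, rfl⟩
  rw [hvg02] at hgp02 hdsid hgx
  obtain ⟨vg12, hvg12⟩ : ∃ x : ℝ, a1*c2 + c1*a2 - 2*(b1*b2) = x := ⟨_, rfl⟩
  rw [hvg12] at hgp12 hdsid hgx
  obtain ⟨vk01, hvk01⟩ : ∃ x : ℝ, d0*f1 + f0*d1 - 2*(e0*e1) = x := ⟨_, rfl⟩
  rw [hvk01] at hkp01 hry hesid hgy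
  obtain ⟨vk02, hvk02⟩ : ∃ x : ℝ, d0*f2 + f0*d2 - 2*(e0*e2) = x := ⟨_, rfl⟩
  rw [hvk02] at hkp02 hesid hgy
  obtain ⟨vk12, hvk12⟩ : ∃ x : ℝ, d1*f2 + f1*d2 - 2*(e1*e2) = x := ⟨_, rfl⟩
  rw [hvk12] at hkp12 hesid hgy
  obtain ⟨vPX, hvPX⟩ : ∃ x : ℝ, (a0*(b1*c2 - b2*c1) - a1*(b0*c2 - b2*c0) + a2*(b0*c1 - b1*c0)) = x := ⟨_, rfl⟩
  rw [hvPX] at hgx hdet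
  obtain ⟨vPY, hvPY⟩ : ∃ x : ℝ, (d0*(e1*f2 - e2*f1) - d1*(e0*f2 - e2*f0) + d2*(e0*f1 - e1*f0)) = x := ⟨_, rfl⟩
  rw [hvPY] at hgy hdet
  obtain ⟨vdS, hvdS⟩ : ∃ x : ℝ, (a0+a1+a2)*(c0+c1+c2) - (b0+b1+b2)^2 = x := ⟨_, rfl⟩
  rw [hvdS] at hdsid hdsnn hrev
  obtain ⟨veS, hveS⟩ : ∃ x : ℝ, (d0+d1+d2)*(f0+f1+f2) - (e0+e1+e2)^2 = x := ⟨_, rfl⟩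
  rw [hveS] at hesid hesnn hrev
  exact tail a b c vD0 vD1 vD2 vF0 vF1 vF2 vg01 vg02 vg12 vk01 vk02 vk12 vPX vPY vdS veS ha hb hc hD0 hD1 hD2 hF0 hF1 hF2 hgp01 hgp02 hgp12 hkp01 hkp02 hkp12 hrx hry hdsid hesid hgx hgy hdsnn hesnn hdet hrev



theorem stmt_6 (a b c : ℝ) (ha : 0 ≤ a) (hb : 0 ≤ b) (hc : 0 ≤ c) :
    (∃ (A B : Fin 3 → Matrix (Fin 2) (Fin 2) ℝ),
        (∀ i, (A i).PosSemidef) ∧ (∀ j, (B j).PosSemidef) ∧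
        ∀ i j, (!![a, b, c; c, a, b; b, c, a] : Matrix (Fin 3) (Fin 3) ℝ) i j
          = (A i * B j).trace) ↔
    a ^ 2 + b ^ 2 + c ^ 2 - 2 * (a * b + a * c + b * c) ≤ 0 := by
  constructor
  · rintro ⟨A, B, hA, hB, hM⟩
    obtain ⟨hA0a, hA0c, hA0s, hA0d⟩ := psd_facts _ (hA 0)
    obtain ⟨hB0a, hB0c, hB0s, hB0d⟩ := psd_facts _ (hB 0)
    obtain ⟨hA1a, hA1c, hA1s, hA1d⟩ := psd_facts _ (hA 1)
    obtain ⟨hB1a, hB1c, hB1s, hB1d⟩ := psd_facts _ (hB 1)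
    obtain ⟨hA2a, hA2c, hA2s, hA2d⟩ := psd_facts _ (hA 2)
    obtain ⟨hB2a, hB2c, hB2s, hB2d⟩ := psd_facts _ (hB 2)
    have E00 : A 0 0 0 * B 0 0 0 + 2*(A 0 0 1 * B 0 0 1) + A 0 1 1 * B 0 1 1 = a := by
      have h0 := hM 0 0
      rw [trace_mul_fin_two, hA0s, hB0s] at h0
      norm_num at h0
      linarith only [h0]
    have E01 : A 0 0 0 * B 1 0 0 + 2*(A 0 0 1 * B 1 0 1) + A 0 1 1 * B 1 1 1 = b := by
      have h0 := hM 0 1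
      rw [trace_mul_fin_two, hA0s, hB1s] at h0
      norm_num at h0
      linarith only [h0]
    have E02 : A 0 0 0 * B 2 0 0 + 2*(A 0 0 1 * B 2 0 1) + A 0 1 1 * B 2 1 1 = c := by
      have h0 := hM 0 2
      rw [trace_mul_fin_two, hA0s, hB2s] at h0
      norm_num [Matrix.cons_val_two] at h0
      linarith only [h0]
    have E10 : A 1 0 0 * B 0 0 0 + 2*(A 1 0 1 * B 0 0 1) + A 1 1 1 * B 0 1 1 = c := by
      have h0 := hM 1 0
      rw [trace_mul_fin_two, hA1s, hB0s] at h0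
      norm_num at h0
      linarith only [h0]
    have E11 : A 1 0 0 * B 1 0 0 + 2*(A 1 0 1 * B 1 0 1) + A 1 1 1 * B 1 1 1 = a := by
      have h0 := hM 1 1
      rw [trace_mul_fin_two, hA1s, hB1s] at h0
      norm_num at h0
      linarith only [h0]
    have E12 : A 1 0 0 * B 2 0 0 + 2*(A 1 0 1 * B 2 0 1) + A 1 1 1 * B 2 1 1 = b := by
      have h0 := hM 1 2
      rw [trace_mul_fin_two, hA1s, hB2s] at h0
      norm_num [Matrix.cons_val_two] at h0
      linarith only [h0]
    have E20 : A 2 0 0 * B 0 0 0 + 2*(A 2 0 1 * B 0 0 1) + A 2 1 1 * B 0 1 1 = b := by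
      have h0 := hM 2 0
      rw [trace_mul_fin_two, hA2s, hB0s] at h0
      norm_num [Matrix.cons_val_two] at h0
      linarith only [h0]
    have E21 : A 2 0 0 * B 1 0 0 + 2*(A 2 0 1 * B 1 0 1) + A 2 1 1 * B 1 1 1 = c := by
      have h0 := hM 2 1
      rw [trace_mul_fin_two, hA2s, hB1s] at h0
      norm_num [Matrix.cons_val_two] at h0
      linarith only [h0]
    have E22 : A 2 0 0 * B 2 0 0 + 2*(A 2 0 1 * B 2 0 1) + A 2 1 1 * B 2 1 1 = a := by
      have h0 := hM 2 2
      rw [trace_mul_fin_two, hA2s, hB2s] at h0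
      norm_num [Matrix.cons_val_two] at h0
      linarith only [h0]
    exact necessity_scalar a b c (A 0 0 0) (A 0 0 1) (A 0 1 1) (A 1 0 0) (A 1 0 1) (A 1 1 1) (A 2 0 0) (A 2 0 1) (A 2 1 1) (B 0 0 0) (B 0 0 1) (B 0 1 1) (B 1 0 0) (B 1 0 1) (B 1 1 1) (B 2 0 0) (B 2 0 1) (B 2 1 1) ha hb hc hA0a hA0c hA0d hA1a hA1c hA1d hA2a hA2c hA2d hB0a hB0c hB0d hB1a hB1c hB1d hB2a hB2c hB2d E00 E01 E02 E10 E11 E12 E20 E21 E22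
  · intro h
    obtain ⟨s, hs0, hs2⟩ : ∃ s : ℝ, 0 ≤ s ∧ s^2 = 3 :=
      ⟨Real.sqrt 3, Real.sqrt_nonneg _, Real.sq_sqrt (by norm_num)⟩
    have hra : 0 ≤ (2*b+2*c-a)/3 := by
      nlinarith only [h, ha, hb, hc, sq_nonneg (b-c), mul_nonneg hb hc]
    have hrb : 0 ≤ (2*c+2*a-b)/3 := by
      nlinarith only [h, ha, hb, hc, sq_nonneg (c-a), mul_nonneg hc ha]
    have hrc : 0 ≤ (2*a+2*b-c)/3 := by
      nlinarith only [h, ha, hb, hc, sq_nonneg (a-b), mul_nonneg ha hb]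
    have hqa : (s*(c-b)/3)^2 ≤ a * ((2*b+2*c-a)/3) := by
      rw [show (s*(c-b)/3)^2 = s^2*((c-b)^2/9) by ring, hs2]
      nlinarith only [h]
    have hqb : (s*(a-c)/3)^2 ≤ b * ((2*c+2*a-b)/3) := by
      rw [show (s*(a-c)/3)^2 = s^2*((a-c)^2/9) by ring, hs2]
      nlinarith only [h]
    have hqc : (s*(b-a)/3)^2 ≤ c * ((2*a+2*b-c)/3) := by
      rw [show (s*(b-a)/3)^2 = s^2*((b-a)^2/9) by ring, hs2]
      nlinarith only [h]
    refine ⟨![!![1, 0; 0, 0],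
             !![1/4, s/4; s/4, 3/4],
             !![1/4, -s/4; -s/4, 3/4]],
            ![!![a, s*(c-b)/3; s*(c-b)/3, (2*b+2*c-a)/3],
             !![b, s*(a-c)/3; s*(a-c)/3, (2*c+2*a-b)/3],
             !![c, s*(b-a)/3; s*(b-a)/3, (2*a+2*b-c)/3]], ?_, ?_, ?_⟩
    · intro i
      fin_cases i
      · exact psd2 1 0 0 (by norm_num) (by norm_num) (by norm_num)
      · exact psd2 (1/4) (s/4) (3/4) (by norm_num) (by norm_num)
          (by rw [show (s/4)^2 = s^2/16 by ring, hs2]; norm_num)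
      · exact psd2 (1/4) (-s/4) (3/4) (by norm_num) (by norm_num)
          (by rw [show (-s/4)^2 = s^2/16 by ring, hs2]; norm_num)
    · intro j
      fin_cases j
      · exact psd2 _ _ _ ha hra hqa
      · exact psd2 _ _ _ hb hrb hqb
      · exact psd2 _ _ _ hc hrc hqc
    · intro i j
      fin_cases i <;> fin_cases j <;>
        rw [trace_mul_fin_two] <;> simp <;>
        first
        | ring1
        | linear_combination ((c-b)/6)*hs2
        | linear_combination (-((c-b)/6))*hs2
        | linear_combination ((a-c)/6)*hs2
        | linear_combination (-((a-c)/6))*hs2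
        | linear_combination ((b-a)/6)*hs2
        | linear_combination (-((b-a)/6))*hs2
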